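/- Let A be a commutative local ring satisfying Weierstrass division, and let f ∈ A[[t]] reduce modulo the maximal ideal to tⁿ·u(t) with u(t) a unit in k[[t]]. Then there exists a unique monic polynomial q ∈ A[t] of degree n and a unique unit v ∈ A[[t]]ˣ such that f = q·v. Moreover q ≡ tⁿ modulo the maximal ideal. -/

import Mathlib

set_option maxHeartbeats 1000000
set_option synthInstance.maxHeartbeats 400000


open PowerSeries

def WeierstrassReady {A : Type*} [CommRing A] [IsLocalRing A]
    (f : PowerSeries A) (n : ℕ) : Prop :=
  ∃ u : (PowerSeries (IsLocalRing.ResidueField A))ˣ,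
    PowerSeries.map (IsLocalRing.residue A) f = PowerSeries.X ^ n * (u : PowerSeries _)

def SatisfiesWeierstrassDivision (A : Type*) [CommRing A] [IsLocalRing A] : Prop :=
  ∀ (f : PowerSeries A) (n : ℕ), WeierstrassReady f n →
    ∃ b : Module.Basis (Fin n) A (PowerSeries A ⧸ Ideal.span {f}),
      ∀ i : Fin n, b i = Ideal.Quotient.mk (Ideal.span {f}) (PowerSeries.X ^ (i : ℕ))

namespace WeierstrassAux

open IsLocalRing

variable {A : Type*} [CommRing A] [IsLocalRing A]

/-- Coercion of polynomials to power series commutes with `map`. -/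
lemma coe_poly_map {B : Type*} [CommRing B] (σ : A →+* B) (p : Polynomial A) :
    ((p.map σ : Polynomial B) : PowerSeries B) = PowerSeries.map σ (p : PowerSeries A) := by
  ext m
  simp [Polynomial.coeff_coe, PowerSeries.coeff_map, Polynomial.coeff_map]

/-- A polynomial of degree `< N` lying in the span of a Weierstrass-ready power series
(at level `N`) must vanish. -/
lemma poly_eq_zero (hA : SatisfiesWeierstrassDivision A)
    {F : PowerSeries A} {N : ℕ} (hF : WeierstrassReady F N)
    {p : Polynomial A} (hdeg : p.degree < (N : WithBot ℕ))
    (hmem : (p : PowerSeries A) ∈ Ideal.span {F}) : p = 0 := by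
  obtain ⟨b, hb⟩ := hA F N hF
  have hco : ∀ i : ℕ, N ≤ i → p.coeff i = 0 := fun i hi =>
    Polynomial.coeff_eq_zero_of_degree_lt (hdeg.trans_le (by exact_mod_cast hi))
  have hsum : (p : PowerSeries A) =
      ∑ i : Fin N, p.coeff (i : ℕ) • (PowerSeries.X : PowerSeries A) ^ (i : ℕ) := by
    ext m
    rw [map_sum, Polynomial.coeff_coe]
    by_cases hm : m < N
    · rw [Finset.sum_eq_single (⟨m, hm⟩ : Fin N)]
      · simp [PowerSeries.coeff_X_pow]
      · intro i _ hne
        have hmi : m ≠ (i : ℕ) := by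
          intro h
          exact hne (Fin.ext h.symm)
        simp [PowerSeries.coeff_X_pow, hmi]
      · intro h
        exact absurd (Finset.mem_univ _) h
    · rw [hco m (le_of_not_gt hm)]
      refine (Finset.sum_eq_zero ?_).symm
      intro i _
      have hmi : m ≠ (i : ℕ) := by
        intro h
        exact hm (h ▸ i.isLt)
      simp [PowerSeries.coeff_X_pow, hmi]
  have h0 : (Ideal.Quotient.mk (Ideal.span {F})) (p : PowerSeries A) = 0 :=
    Ideal.Quotient.eq_zero_iff_mem.2 hmem
  have hrep : ∑ i : Fin N, p.coeff (i : ℕ) • b i = 0 := by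
    calc ∑ i : Fin N, p.coeff (i : ℕ) • b i
        = ∑ i : Fin N, p.coeff (i : ℕ) •
            (Ideal.Quotient.mkₐ A (Ideal.span {F}) ((PowerSeries.X : PowerSeries A) ^ (i : ℕ))) := by
          simp_rw [hb]; rfl
      _ = Ideal.Quotient.mkₐ A (Ideal.span {F})
            (∑ i : Fin N, p.coeff (i : ℕ) • (PowerSeries.X : PowerSeries A) ^ (i : ℕ)) := by
          rw [map_sum]
          simp_rw [map_smul]
      _ = 0 := by rw [← hsum]; exact h0
  have hcoef := Fintype.linearIndependent_iff.1 b.linearIndependent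
    (fun i => p.coeff (i : ℕ)) hrep
  ext i
  by_cases hi : i < N
  · simpa using hcoef ⟨i, hi⟩
  · simp [hco i (le_of_not_gt hi)]

/-- A monic polynomial of degree `n` whose coercion's residue is divisible by `X^n`
reduces to `X^n`. -/
lemma map_residue_eq_X_pow {q : Polynomial A} {n : ℕ} (hq : q.Monic) (hdeg : q.natDegree = n)
    (hdvd : (PowerSeries.X : PowerSeries (ResidueField A)) ^ n ∣
      (PowerSeries.map (residue A) (q : PowerSeries A))) :
    q.map (residue A) = Polynomial.X ^ n := by
  have hlow : ∀ i, i < n → (q.map (residue A)).coeff i = 0 := by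
    intro i hi
    have := PowerSeries.X_pow_dvd_iff.1 (by rwa [← coe_poly_map] at hdvd) i hi
    simpa [Polynomial.coeff_coe] using this
  have hnat : (q.map (residue A)).natDegree ≤ n := hdeg ▸ Polynomial.natDegree_map_le
  ext i
  rcases lt_trichotomy i n with h | h | h
  · rw [hlow i h, Polynomial.coeff_X_pow, if_neg (Nat.ne_of_lt h)]
  · subst h
    rw [Polynomial.coeff_X_pow, if_pos rfl, Polynomial.coeff_map, ← hdeg,
      Polynomial.Monic.coeff_natDegree hq, map_one]
  · rw [Polynomial.coeff_eq_zero_of_natDegree_lt (lt_of_le_of_lt hnat h),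
      Polynomial.coeff_X_pow, if_neg (Nat.ne_of_gt h)]

/-- A monic polynomial of degree `n` that reduces to `X^n` is a non-zero-divisor in `A⟦X⟧`. -/
lemma regular_of_ready (hA : SatisfiesWeierstrassDivision A)
    {q : Polynomial A} {n : ℕ} (hq : q.Monic) (hdeg : q.natDegree = n)
    (hres : q.map (residue A) = Polynomial.X ^ n)
    (h : PowerSeries A) (hh : (q : PowerSeries A) * h = 0) : h = 0 := by
  ext k
  rw [map_zero]
  set T : Polynomial A := PowerSeries.trunc (k + 1) h with hT
  set tl : PowerSeries A := PowerSeries.mk fun i => PowerSeries.coeff (i + (k + 1)) h with htl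
  have hdec : (T : PowerSeries A) + PowerSeries.X ^ (k + 1) * tl = h := by
    ext m
    rw [map_add, Polynomial.coeff_coe, PowerSeries.coeff_trunc]
    rcases lt_or_ge m (k + 1) with hm | hm
    · rw [if_pos hm, PowerSeries.coeff_X_pow_mul', if_neg (not_le.2 hm), add_zero]
    · rw [if_neg (not_lt.2 hm), PowerSeries.coeff_X_pow_mul', if_pos hm, zero_add,
        PowerSeries.coeff_mk]
      rw [Nat.sub_add_cancel hm]
  have hqT : ((q * T : Polynomial A) : PowerSeries A) ∈
      Ideal.span {(q : PowerSeries A) * PowerSeries.X ^ (k + 1)} := by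
    have heq : ((q * T : Polynomial A) : PowerSeries A) =
        -(((q : PowerSeries A) * PowerSeries.X ^ (k + 1)) * tl) := by
      rw [Polynomial.coe_mul]
      have : (T : PowerSeries A) = h - PowerSeries.X ^ (k + 1) * tl := by
        rw [← hdec]; ring
      rw [this, mul_sub, hh, zero_sub]
      ring
    rw [heq]
    exact neg_mem (Ideal.mem_span_singleton.2 ⟨tl, rfl⟩)
  have hready : WeierstrassReady ((q : PowerSeries A) * PowerSeries.X ^ (k + 1)) (n + (k + 1)) := by
    refine ⟨1, ?_⟩
    rw [map_mul, map_pow, PowerSeries.map_X, ← coe_poly_map, hres, Units.val_one, mul_one,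
      Polynomial.coe_pow, Polynomial.coe_X, ← pow_add]
  have hdeg2 : ((q * T : Polynomial A)).degree < ((n + (k + 1) : ℕ) : WithBot ℕ) := by
    refine lt_of_le_of_lt (Polynomial.degree_mul_le _ _) ?_
    have h1 : q.degree ≤ (n : WithBot ℕ) := by
      rw [← hdeg]; exact Polynomial.degree_le_natDegree
    have h2 : T.degree < ((k + 1 : ℕ) : WithBot ℕ) := by
      exact_mod_cast PowerSeries.degree_trunc_lt h (k + 1)
    calc q.degree + T.degree ≤ (n : WithBot ℕ) + T.degree := add_le_add_left h1 _
      _ < (n : WithBot ℕ) + ((k + 1 : ℕ) : WithBot ℕ) := by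
          exact WithBot.add_lt_add_left (by simp) h2
      _ = ((n + (k + 1) : ℕ) : WithBot ℕ) := by push_cast; ring
  have hzero : q * T = 0 := poly_eq_zero hA hready hdeg2 hqT
  have hT0 : T = 0 := by
    have hreg := hq.isRegular.left
    exact hreg (show q * T = q * 0 by rw [hzero, mul_zero])
  have : PowerSeries.coeff k h = T.coeff k := by
    rw [hT, PowerSeries.coeff_trunc, if_pos (Nat.lt_succ_self k)]
  rw [this, hT0, Polynomial.coeff_zero]

end WeierstrassAux

open IsLocalRing WeierstrassAux in
/-- Weierstrass preparation: there is a unique pair `(q, v)` of a monic polynomial of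
degree `n` and a unit `v ∈ A[[t]]ˣ` with `f = q·v`; moreover `q ≡ tⁿ` mod the maximal
ideal. -/
theorem weierstrass_preparation {A : Type*} [CommRing A] [IsLocalRing A]
    (hA : SatisfiesWeierstrassDivision A)
    (f : PowerSeries A) (n : ℕ) (hf : WeierstrassReady f n) :
    (∃! qv : Polynomial A × (PowerSeries A)ˣ,
        qv.1.Monic ∧ qv.1.natDegree = n ∧ f = (qv.1 : PowerSeries A) * (qv.2 : PowerSeries A)) ∧
    (∀ (q : Polynomial A) (v : (PowerSeries A)ˣ),
        q.Monic → q.natDegree = n → f = (q : PowerSeries A) * (v : PowerSeries A) →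
        q.map (IsLocalRing.residue A) = Polynomial.X ^ n) := by
  classical
  obtain ⟨u, hu⟩ := hf
  -- Part 2: any monic factorization reduces to X^n.
  have part2 : ∀ (q : Polynomial A) (v : (PowerSeries A)ˣ),
      q.Monic → q.natDegree = n → f = (q : PowerSeries A) * (v : PowerSeries A) →
      q.map (IsLocalRing.residue A) = Polynomial.X ^ n := by
    intro q v hq hdeg hfe
    refine map_residue_eq_X_pow hq hdeg ?_
    set vb : (PowerSeries (ResidueField A))ˣ :=
      Units.map (PowerSeries.map (residue A)).toMonoidHom v with hvb
    have h1 : PowerSeries.map (residue A) (q : PowerSeries A) * (vb : PowerSeries _) =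
        PowerSeries.X ^ n * (u : PowerSeries _) := by
      rw [← hu, hfe, map_mul]
      rfl
    refine ⟨(u : PowerSeries _) * ((vb⁻¹ : _ˣ) : PowerSeries _), ?_⟩
    calc PowerSeries.map (residue A) (q : PowerSeries A)
        = PowerSeries.map (residue A) (q : PowerSeries A) * ((vb : PowerSeries _) *
            ((vb⁻¹ : _ˣ) : PowerSeries _)) := by
          rw [Units.mul_inv, mul_one]
      _ = (PowerSeries.map (residue A) (q : PowerSeries A) * (vb : PowerSeries _)) *
            ((vb⁻¹ : _ˣ) : PowerSeries _) := by ring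
      _ = PowerSeries.X ^ n * ((u : PowerSeries _) * ((vb⁻¹ : _ˣ) : PowerSeries _)) := by
          rw [h1]; ring
  refine ⟨?_, part2⟩
  -- Existence.
  obtain ⟨b, hb⟩ := hA f n ⟨u, hu⟩
  set a : Fin n → A := fun i => b.repr (Ideal.Quotient.mk (Ideal.span {f}) (PowerSeries.X ^ n)) i
    with ha
  set r : Polynomial A := ∑ i : Fin n, Polynomial.C (a i) * Polynomial.X ^ (i : ℕ) with hr
  set q : Polynomial A := Polynomial.X ^ n - r with hqdef
  have hrdeg : r.degree < (n : WithBot ℕ) := by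
    rw [hr]
    refine lt_of_le_of_lt (Polynomial.degree_sum_le _ _) ?_
    refine (Finset.sup_lt_iff (WithBot.bot_lt_coe n)).2 ?_
    intro i _
    exact lt_of_le_of_lt (Polynomial.degree_C_mul_X_pow_le _ _) (Nat.cast_lt.2 i.isLt)
  have hqmonic : q.Monic := Polynomial.monic_X_pow_sub (by exact_mod_cast hrdeg)
  have hqdeg : q.degree = (n : WithBot ℕ) := by
    rw [hqdef]
    rw [Polynomial.degree_sub_eq_left_of_degree_lt (by rwa [Polynomial.degree_X_pow])]
    exact Polynomial.degree_X_pow n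
  have hqnat : q.natDegree = n := Polynomial.natDegree_eq_of_degree_eq_some hqdeg
  have hrcoe : ((r : Polynomial A) : PowerSeries A) =
      ∑ i : Fin n, a i • (PowerSeries.X : PowerSeries A) ^ (i : ℕ) := by
    rw [hr, ← Polynomial.coeToPowerSeries.ringHom_apply, map_sum]
    refine Finset.sum_congr rfl fun i _ => ?_
    rw [Polynomial.coeToPowerSeries.ringHom_apply, Polynomial.coe_mul, Polynomial.coe_C,
      Polynomial.coe_pow, Polynomial.coe_X, PowerSeries.smul_eq_C_mul]
  have hqcoe : (q : PowerSeries A) =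
      PowerSeries.X ^ n - ∑ i : Fin n, a i • (PowerSeries.X : PowerSeries A) ^ (i : ℕ) := by
    rw [hqdef, Polynomial.coe_sub, Polynomial.coe_pow, Polynomial.coe_X, hrcoe]
  have hmk : Ideal.Quotient.mk (Ideal.span {f}) (q : PowerSeries A) = 0 := by
    rw [hqcoe, map_sub, map_sum]
    have hterm : ∀ i : Fin n,
        Ideal.Quotient.mk (Ideal.span {f}) (a i • (PowerSeries.X : PowerSeries A) ^ (i : ℕ)) =
        a i • b i := by
      intro i
      rw [hb i]
      exact map_smul (Ideal.Quotient.mkₐ A (Ideal.span {f})) _ _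
    rw [Finset.sum_congr rfl fun i _ => hterm i]
    have hbr := b.sum_repr (Ideal.Quotient.mk (Ideal.span {f}) (PowerSeries.X ^ n))
    rw [ha]
    rw [hbr]
    exact sub_self _
  have hqmem : (q : PowerSeries A) ∈ Ideal.span {f} := Ideal.Quotient.eq_zero_iff_mem.1 hmk
  obtain ⟨w, hw⟩ : f ∣ (q : PowerSeries A) := Ideal.mem_span_singleton.1 hqmem
  have hqres : q.map (IsLocalRing.residue A) = Polynomial.X ^ n := by
    refine map_residue_eq_X_pow hqmonic hqnat ?_
    refine ⟨(u : PowerSeries _) * PowerSeries.map (residue A) w, ?_⟩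
    rw [hw, map_mul, hu]
    ring
  have hmapq : PowerSeries.map (residue A) (q : PowerSeries A) =
      PowerSeries.X ^ n := by
    rw [← coe_poly_map, hqres, Polynomial.coe_pow, Polynomial.coe_X]
  have hwres : (PowerSeries.map (residue A) w) * (u : PowerSeries _) = 1 := by
    have h1 : PowerSeries.X ^ n * ((u : PowerSeries _) * PowerSeries.map (residue A) w) =
        PowerSeries.X ^ n * 1 := by
      have hexp : PowerSeries.map (residue A) (q : PowerSeries A) =
          PowerSeries.X ^ n * ((u : PowerSeries _) * PowerSeries.map (residue A) w) := by
        rw [hw, map_mul, hu]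
        ring
      rw [← hexp, hmapq, mul_one]
    have h2 := mul_left_cancel₀ (pow_ne_zero n (PowerSeries.X_ne_zero)) h1
    rw [← h2]
    ring
  have hwunit : IsUnit w := by
    rw [PowerSeries.isUnit_iff_constantCoeff]
    have hcu : IsUnit (PowerSeries.constantCoeff (PowerSeries.map (residue A) w)) :=
      PowerSeries.isUnit_constantCoeff _ (IsUnit.of_mul_eq_one _ hwres)
    have hcc : PowerSeries.constantCoeff (PowerSeries.map (residue A) w) =
        residue A (PowerSeries.constantCoeff w) := by
      rw [← PowerSeries.coeff_zero_eq_constantCoeff_apply, PowerSeries.coeff_map,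
        PowerSeries.coeff_zero_eq_constantCoeff_apply]
    rw [hcc] at hcu
    exact (IsLocalRing.residue_ne_zero_iff_isUnit _).1 hcu.ne_zero
  obtain ⟨W, hW⟩ := hwunit
  have hqW : (q : PowerSeries A) = f * (W : PowerSeries A) := by rw [hw, hW]
  have hfv : f = (q : PowerSeries A) * ((W⁻¹ : (PowerSeries A)ˣ) : PowerSeries A) := by
    rw [hqW, mul_assoc, Units.mul_inv, mul_one]
  refine ⟨(q, W⁻¹), ⟨hqmonic, hqnat, hfv⟩, ?_⟩
  -- Uniqueness.
  rintro ⟨q', v'⟩ ⟨hq'm, hq'deg, hq'fe⟩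
  have hq'mem : ((q' : Polynomial A) : PowerSeries A) ∈ Ideal.span {f} := by
    rw [Ideal.mem_span_singleton]
    refine ⟨((v'⁻¹ : (PowerSeries A)ˣ) : PowerSeries A), ?_⟩
    rw [hq'fe, mul_assoc, Units.mul_inv, mul_one]
  have hqq' : q' = q := by
    have hdlt : (q' - q).degree < (n : WithBot ℕ) := by
      have hdd : q'.degree = q.degree := by
        rw [hqdeg, Polynomial.degree_eq_natDegree hq'm.ne_zero, hq'deg]
      have := Polynomial.degree_sub_lt hdd hq'm.ne_zero
        (by rw [hq'm.leadingCoeff, hqmonic.leadingCoeff])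
      rwa [Polynomial.degree_eq_natDegree hq'm.ne_zero, hq'deg] at this
    have hmem2 : ((q' - q : Polynomial A) : PowerSeries A) ∈ Ideal.span {f} := by
      rw [Polynomial.coe_sub]
      exact Ideal.sub_mem _ hq'mem hqmem
    exact sub_eq_zero.1 (poly_eq_zero hA ⟨u, hu⟩ hdlt hmem2)
  have hvv' : v' = W⁻¹ := by
    have hcan : (q : PowerSeries A) * ((v' : PowerSeries A) -
        ((W⁻¹ : (PowerSeries A)ˣ) : PowerSeries A)) = 0 := by
      rw [mul_sub, ← hfv, hq'fe, hqq', sub_self]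
    have h0 := regular_of_ready hA hqmonic hqnat hqres _ hcan
    exact Units.ext (sub_eq_zero.1 h0)
  rw [hqq', hvv']
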